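/- Let B̃ be the 3×3 matrix mask with coefficients B̃_{−2} = (1/16)[[−8, 5, −1], [−15, 7, −1], [0, −12, 4]], B̃_{−1} = I, B̃_0 = (1/16)[[−8, −5, −1], [15, 7, 1], [0, 12, 4]], and B̃_k = 0 otherwise (so that its symbol is (1/(16z²))[[−8(z−1)², −5(z²−1), −(z²+1)], [15(z²−1), 7z²+16z+7, z²−1], [0, 12(z²−1), 4(z²+4z+1)]]). Then B̃ has polynomial vanishing moments of order 3: for every real polynomial f of degree at most 2 and every j ∈ ℤ, ∑_{k∈ℤ} B̃_{j−k} v_{f;k} = 0, where v_{f;k} := (f(k), f'(k), f''(k)) ∈ ℝ³; equivalently, B̃_{−2} v_{f;j+2} + v_{f;j+1} + B̃_0 v_{f;j} = 0 for all j ∈ ℤ. -/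

import Mathlib

open Matrix

/-- The high-pass analysis mask of the quintic Hermite spline filter bank has polynomial
vanishing moments of order 3: it annihilates the Hermite sample sequences
`v_{f;k} = (f(k), f'(k), f''(k))` of every polynomial `f` of degree at most 2. -/
theorem stmt17 (B : ℤ → Matrix (Fin 3) (Fin 3) ℝ)
    (hBm2 : B (-2) = (1/16 : ℝ) • !![-8, 5, -1; -15, 7, -1; 0, -12, 4])
    (hBm1 : B (-1) = 1)
    (hB0 : B 0 = (1/16 : ℝ) • !![-8, -5, -1; 15, 7, 1; 0, 12, 4])
    (hBz : ∀ k : ℤ, k ≠ -2 → k ≠ -1 → k ≠ 0 → B k = 0)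
    (f : ℝ → ℝ) (hf : ∃ a b c : ℝ, ∀ x : ℝ, f x = a + b * x + c * x^2)
    (v : ℤ → Fin 3 → ℝ)
    (hv : ∀ k : ℤ, v k = ![f (k : ℝ), deriv f (k : ℝ), iteratedDeriv 2 f (k : ℝ)]) :
    ∀ j : ℤ,
      ((∑ᶠ k : ℤ, (B (j - k)).mulVec (v k)) = 0) ∧
      (B (-2)).mulVec (v (j+2)) + v (j+1) + (B 0).mulVec (v j) = 0 := by
  obtain ⟨a, b, c, hfx⟩ := hf
  have hfe : f = fun x => a + b * x + c * x ^ 2 := funext hfx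
  have hd : ∀ x : ℝ, deriv f x = b + 2 * c * x := by
    intro x
    rw [hfe]
    have h1 : HasDerivAt (fun x : ℝ => a + b * x + c * x ^ 2) (b + 2 * c * x) x := by
      have := (((hasDerivAt_id x).const_mul b).const_add a).add
        ((hasDerivAt_pow 2 x).const_mul c)
      refine this.congr_deriv ?_
      push_cast
      ring
    exact h1.deriv
  have hdd : ∀ x : ℝ, iteratedDeriv 2 f x = 2 * c := by
    intro x
    rw [show (2 : ℕ) = 1 + 1 from rfl, iteratedDeriv_succ, iteratedDeriv_one]
    rw [show deriv f = fun x => b + 2 * c * x from funext hd]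
    have h1 : HasDerivAt (fun x : ℝ => b + 2 * c * x) (2 * c) x := by
      simpa using ((hasDerivAt_id x).const_mul (2 * c)).const_add b
    exact h1.deriv
  have hvk : ∀ k : ℤ, v k = ![a + b * k + c * (k : ℝ) ^ 2, b + 2 * c * k, 2 * c] := by
    intro k
    rw [hv]
    simp [hfx, hd, hdd]
  intro j
  have key : ∀ m : ℤ, (B (-2)).mulVec (v (m + 2)) + v (m + 1) + (B 0).mulVec (v m) = 0 := by
    intro m
    funext i
    fin_cases i <;>
      simp [hBm2, hB0, hvk, Matrix.mulVec, dotProduct, Fin.sum_univ_three, Matrix.smul_apply, Matrix.vecHead, Matrix.vecTail] <;>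
      push_cast <;> ring
  refine ⟨?_, key j⟩
  have hsupp : (Function.support fun k : ℤ => (B (j - k)).mulVec (v k)) ⊆
      (({j, j + 1, j + 2} : Finset ℤ) : Set ℤ) := by
    intro k hk
    simp only [Function.mem_support] at hk
    by_contra hmem
    simp only [Finset.coe_insert, Set.mem_insert_iff, Finset.coe_singleton,
      Set.mem_singleton_iff] at hmem
    push_neg at hmem
    have hz : B (j - k) = 0 := by
      apply hBz <;> omega
    exact hk (by rw [hz]; simp [Matrix.mulVec])
  rw [finsum_eq_finset_sum_of_support_subset _ hsupp]
  have h1 : (j : ℤ) ∉ ({j + 1, j + 2} : Finset ℤ) := by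
    simp only [Finset.mem_insert, Finset.mem_singleton]; omega
  have h2 : (j + 1 : ℤ) ∉ ({j + 2} : Finset ℤ) := by
    simp only [Finset.mem_singleton]; omega
  rw [Finset.sum_insert h1, Finset.sum_insert h2, Finset.sum_singleton]
  have e0 : j - j = 0 := by ring
  have e1 : j - (j + 1) = -1 := by ring
  have e2 : j - (j + 2) = -2 := by ring
  rw [e0, e1, e2, hBm1, Matrix.one_mulVec]
  have := key j
  linear_combination (norm := abel) this
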